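/- Let T : X → Y be a bounded injective linear operator between Hilbert spaces with spectral measure E of T*T, and for x ∈ X let μ_x(A) = ‖E_A x‖². For 0 ≤ ν < γ define ‖x‖_{ν:γ}² = sup_{t>0} t^{-2ν/γ} ∫_{[0,∞)} t²/(t² + λ^{2γ}) dμ_x(λ) and |||x|||_ν = sup_{t>0} t^{-ν} ‖E_{[0,t)} x‖. Then √(1 - ν/γ) · ‖x‖_{ν:γ} ≤ |||x|||_ν ≤ N_{ν/γ} · ‖x‖_{ν:γ}. -/

import Mathlib

open MeasureTheory Set ENNReal Filter Topology

lemma lint_rpow (θ : ℝ) (h1 : θ < 1) :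
    ∫⁻ u in Ioo (0:ℝ) 1, ENNReal.ofReal (u ^ (-θ)) = ENNReal.ofReal (1/(1-θ)) := by
  have hint : IntegrableOn (fun u : ℝ => u ^ (-θ)) (Ioo 0 1) := by
    have := (intervalIntegral.intervalIntegrable_rpow' (r := -θ) (by linarith)
      (a := 0) (b := 1))
    rw [intervalIntegrable_iff, uIoc_of_le (by norm_num : (0:ℝ) ≤ 1)] at this
    exact this.mono_set Ioo_subset_Ioc_self
  rw [← ofReal_integral_eq_lintegral_ofReal hint]
  · congr 1
    rw [← integral_Ioc_eq_integral_Ioo,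
      ← intervalIntegral.integral_of_le (by norm_num : (0:ℝ) ≤ 1),
      integral_rpow (Or.inl (by linarith))]
    rw [Real.one_rpow, Real.zero_rpow (by linarith)]
    ring
  · filter_upwards [self_mem_ae_restrict measurableSet_Ioo] with u hu
    exact Real.rpow_nonneg hu.1.le _

lemma partA (μ : Measure ℝ) [IsFiniteMeasure μ] (hsupp : μ (Iio 0) = 0)
    (ν γ : ℝ) (hν : 0 ≤ ν) (hγ : ν < γ) (hγ0 : 0 < γ) (t : ℝ) (ht : 0 < t)
    (S2 : ℝ≥0∞)
    (hS2 : ∀ r, 0 < r → ENNReal.ofReal (r ^ (-(2*ν))) * μ (Ico 0 r) ≤ S2) :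
    ∫⁻ l, ENNReal.ofReal (t ^ 2 / (t ^ 2 + l ^ (2*γ))) ∂μ
      ≤ ENNReal.ofReal (t ^ (2*ν/γ) * (1/(1-ν/γ))) * S2 := by
  have hθ0 : 0 ≤ ν/γ := div_nonneg hν hγ0.le
  have hθ1 : ν/γ < 1 := (div_lt_one hγ0).2 hγ
  have ht2 : (0:ℝ) < t ^ 2 := by positivity
  have hmble : AEMeasurable (fun l : ℝ => t ^ 2 / (t ^ 2 + l ^ (2*γ))) μ := by
    fun_prop
  have hnn : 0 ≤ᵐ[μ] fun l : ℝ => t ^ 2 / (t ^ 2 + l ^ (2*γ)) := by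
    rw [Filter.EventuallyLE, ae_iff]
    refine measure_mono_null (fun l hl => ?_) hsupp
    simp only [mem_setOf_eq, not_le, Pi.zero_apply] at hl
    by_contra h
    simp only [mem_Iio, not_lt] at h
    exact absurd (div_nonneg ht2.le (by positivity)) (not_le.2 hl)
  rw [lintegral_eq_lintegral_meas_lt μ hnn hmble]
  have key : ∀ u ∈ Ioi (0:ℝ), μ {l | u < t ^ 2 / (t ^ 2 + l ^ (2*γ))}
      ≤ (Ioo (0:ℝ) 1).indicator
        (fun u => ENNReal.ofReal (t ^ (2*ν/γ) * u ^ (-(ν/γ))) * S2) u := by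
    intro u hu
    have hu0 : (0:ℝ) < u := hu
    by_cases hu1 : u < 1
    · rw [indicator_of_mem (show u ∈ Ioo (0:ℝ) 1 from ⟨hu0, hu1⟩)]
      set r : ℝ := (t^2/u) ^ (1/(2*γ)) with hrdef
      have hq : (0:ℝ) < t^2/u := by positivity
      have hr : 0 < r := Real.rpow_pos_of_pos hq _
      have hrg : r ^ (2*γ) = t^2/u := by
        rw [hrdef, ← Real.rpow_mul hq.le, one_div_mul_cancel (by linarith : 2*γ ≠ 0),
          Real.rpow_one]
      have hsub : {l : ℝ | u < t ^ 2 / (t ^ 2 + l ^ (2*γ))} ⊆ Ico 0 r ∪ Iio 0 := by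
        intro l hl
        simp only [mem_setOf_eq] at hl
        rcases lt_or_ge l 0 with h | h
        · exact Or.inr h
        · refine Or.inl ⟨h, ?_⟩
          have hd : (0:ℝ) < t ^ 2 + l ^ (2*γ) := by
            have := Real.rpow_nonneg h (2*γ); linarith
          have h1 : u * (t ^ 2 + l ^ (2*γ)) < t ^ 2 := (lt_div_iff₀ hd).1 hl
          have h2 : l ^ (2*γ) < t^2/u := by
            rw [lt_div_iff₀ hu0]
            nlinarith [Real.rpow_nonneg h (2*γ)]
          by_contra hrl
          push_neg at hrl
          have := Real.rpow_le_rpow hr.le hrl (by linarith : (0:ℝ) ≤ 2*γ)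
          rw [hrg] at this
          linarith
      have hm : μ {l : ℝ | u < t ^ 2 / (t ^ 2 + l ^ (2*γ))} ≤ μ (Ico 0 r) := by
        refine le_trans (measure_mono hsub) ?_
        refine le_trans (measure_union_le _ _) ?_
        rw [hsupp, add_zero]
      refine le_trans hm ?_
      have h1 : μ (Ico 0 r) = ENNReal.ofReal (r ^ (2*ν)) *
          (ENNReal.ofReal (r ^ (-(2*ν))) * μ (Ico 0 r)) := by
        rw [← mul_assoc, ← ENNReal.ofReal_mul (by positivity),
          ← Real.rpow_add hr]
        norm_num
      rw [h1]
      refine le_trans (mul_le_mul_right (hS2 r hr) _) ?_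
      refine mul_le_mul_left (ENNReal.ofReal_le_ofReal ?_) _
      -- r ^ (2ν) ≤ t^(2ν/γ) * u^(-(ν/γ))
      have h2 : r ^ (2*ν) = (t^2/u) ^ (ν/γ) := by
        rw [hrdef, ← Real.rpow_mul hq.le]
        congr 1
        field_simp
      rw [h2, Real.div_rpow (by positivity) hu0.le, Real.rpow_neg hu0.le,
        div_eq_mul_inv]
      gcongr
      rw [← Real.rpow_natCast t 2, ← Real.rpow_mul ht.le]
      apply le_of_eq
      congr 1
      push_cast
      ring
    · rw [indicator_of_notMem (by simp [mem_Ioo, hu1])]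
      push_neg at hu1
      have : {l : ℝ | u < t ^ 2 / (t ^ 2 + l ^ (2*γ))} ⊆ Iio 0 := by
        intro l hl
        simp only [mem_setOf_eq] at hl
        by_contra h
        simp only [mem_Iio, not_lt] at h
        have hd : (0:ℝ) < t ^ 2 + l ^ (2*γ) := by
          have := Real.rpow_nonneg h (2*γ); linarith
        have : t ^ 2 / (t ^ 2 + l ^ (2*γ)) ≤ 1 := by
          rw [div_le_one hd]
          have := Real.rpow_nonneg h (2*γ); linarith
        linarith
      rw [measure_mono_null this hsupp]
  calc ∫⁻ u in Ioi (0:ℝ), μ {l | u < t ^ 2 / (t ^ 2 + l ^ (2*γ))}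
      ≤ ∫⁻ u in Ioi (0:ℝ), (Ioo (0:ℝ) 1).indicator
          (fun u => ENNReal.ofReal (t ^ (2*ν/γ) * u ^ (-(ν/γ))) * S2) u := by
        refine lintegral_mono_ae ?_
        filter_upwards [self_mem_ae_restrict measurableSet_Ioi] with u hu
        exact key u hu
    _ = ∫⁻ u in Ioo (0:ℝ) 1,
          ENNReal.ofReal (t ^ (2*ν/γ) * u ^ (-(ν/γ))) * S2 := by
        rw [lintegral_indicator measurableSet_Ioo,
          Measure.restrict_restrict measurableSet_Ioo,
          inter_eq_self_of_subset_left (fun x hx => hx.1)]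
    _ = ENNReal.ofReal (t ^ (2*ν/γ) * (1/(1-ν/γ))) * S2 := by
        have : ∀ u ∈ Ioo (0:ℝ) 1,
            ENNReal.ofReal (t ^ (2*ν/γ) * u ^ (-(ν/γ))) * S2
            = (ENNReal.ofReal (t ^ (2*ν/γ)) * S2) * ENNReal.ofReal (u ^ (-(ν/γ))) := by
          intro u hu
          rw [ENNReal.ofReal_mul (by positivity)]
          ring
        rw [setLIntegral_congr_fun measurableSet_Ioo this,
          lintegral_const_mul _ (by fun_prop), lint_rpow _ hθ1,
          ENNReal.ofReal_mul (by positivity)]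
        ring


lemma partB (μ : Measure ℝ) [IsFiniteMeasure μ] (hsupp : μ (Iio 0) = 0)
    (ν γ : ℝ) (hν : 0 ≤ ν) (hγ : ν < γ) (hγ0 : 0 < γ) (t : ℝ) (ht : 0 < t)
    (S1 : ℝ≥0∞)
    (hS1 : ∀ s, 0 < s → ENNReal.ofReal (s ^ (-(2*ν/γ))) *
      ∫⁻ l, ENNReal.ofReal (s ^ 2 / (s ^ 2 + l ^ (2*γ))) ∂μ ≤ S1) :
    ENNReal.ofReal (t ^ (-(2*ν))) * μ (Ico 0 t)
      ≤ ENNReal.ofReal (((ν/γ) ^ (ν/γ) * (1 - ν/γ) ^ (1 - ν/γ))⁻¹) * S1 := by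
  have hA : (0:ℝ) < t ^ (2*γ) := Real.rpow_pos_of_pos ht _
  have step : ∀ s : ℝ, 0 < s →
      ENNReal.ofReal (s^2/(s^2 + t^(2*γ))) * μ (Ico 0 t)
        ≤ ∫⁻ l, ENNReal.ofReal (s ^ 2 / (s ^ 2 + l ^ (2*γ))) ∂μ := by
    intro s hs
    calc ENNReal.ofReal (s^2/(s^2 + t^(2*γ))) * μ (Ico 0 t)
        = ∫⁻ _ in Ico 0 t, ENNReal.ofReal (s^2/(s^2 + t^(2*γ))) ∂μ :=
          (setLIntegral_const _ _).symm
      _ ≤ ∫⁻ l in Ico 0 t, ENNReal.ofReal (s ^ 2 / (s ^ 2 + l ^ (2*γ))) ∂μ := by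
          refine lintegral_mono_ae ?_
          filter_upwards [self_mem_ae_restrict measurableSet_Ico] with l hl
          refine ENNReal.ofReal_le_ofReal ?_
          have hl2 : l ^ (2*γ) ≤ t ^ (2*γ) :=
            Real.rpow_le_rpow hl.1 hl.2.le (by linarith)
          have hd : (0:ℝ) < s^2 + l^(2*γ) := by
            have := Real.rpow_nonneg hl.1 (2*γ); nlinarith
          exact div_le_div_of_nonneg_left (sq_nonneg s) hd (by linarith)
      _ ≤ ∫⁻ l, ENNReal.ofReal (s ^ 2 / (s ^ 2 + l ^ (2*γ))) ∂μ :=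
          setLIntegral_le_lintegral _ _
  rcases eq_or_lt_of_le hν with h0 | h0
  · -- ν = 0
    subst h0
    simp only [zero_div, Real.rpow_zero, mul_zero, neg_zero, Real.one_rpow, sub_zero,
      one_mul, inv_one, ENNReal.ofReal_one]
    have hm : μ (Ico 0 t) ≠ ⊤ := measure_ne_top μ _
    have seq : ∀ n : ℕ,
        ENNReal.ofReal (((n:ℝ)+1)^2/(((n:ℝ)+1)^2 + t^(2*γ))) * μ (Ico 0 t) ≤ S1 := by
      intro n
      refine le_trans (step ((n:ℝ)+1) (by positivity)) ?_
      have := hS1 ((n:ℝ)+1) (by positivity)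
      simpa [Real.rpow_zero] using this
    have hreal : Tendsto (fun n : ℕ => ((n:ℝ)+1)^2/(((n:ℝ)+1)^2 + t^(2*γ)))
        atTop (𝓝 1) := by
      have h₁ : Tendsto (fun n : ℕ => ((n:ℝ)+1)^2) atTop atTop := by
        apply tendsto_atTop_mono (fun n => ?_) tendsto_natCast_atTop_atTop
        nlinarith [Nat.cast_nonneg (α := ℝ) n]
      have h₂ : Tendsto (fun n : ℕ => t^(2*γ)/((n:ℝ)+1)^2) atTop (𝓝 0) :=
        Tendsto.div_atTop tendsto_const_nhds h₁
      have h₃ : Tendsto (fun n : ℕ => (1 + t^(2*γ)/((n:ℝ)+1)^2)⁻¹) atTop (𝓝 1) := by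
        have := (tendsto_const_nhds (x := (1:ℝ)) (f := atTop (α := ℕ))).add h₂
        rw [add_zero] at this
        simpa using this.inv₀ (by norm_num)
      refine h₃.congr fun n => ?_
      have hn : ((n:ℝ)+1)^2 ≠ 0 := by positivity
      field_simp
    have htend : Tendsto (fun n : ℕ =>
        ENNReal.ofReal (((n:ℝ)+1)^2/(((n:ℝ)+1)^2 + t^(2*γ))) * μ (Ico 0 t))
        atTop (𝓝 (μ (Ico 0 t))) := by
      have := ENNReal.Tendsto.mul_const (ENNReal.tendsto_ofReal hreal)
        (Or.inr hm)
      simpa using this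
    exact le_of_tendsto' htend seq
  · -- ν > 0
    set θ := ν/γ with hθdef
    have hθ : 0 < θ := div_pos h0 hγ0
    have hθ1 : θ < 1 := (div_lt_one hγ0).2 hγ
    set s : ℝ := t^γ * Real.sqrt ((1-θ)/θ) with hsdef
    have hs : 0 < s := mul_pos (Real.rpow_pos_of_pos ht γ)
      (Real.sqrt_pos.2 (div_pos (by linarith) hθ))
    have hs2 : s^2 = t^(2*γ) * ((1-θ)/θ) := by
      rw [hsdef, mul_pow, Real.sq_sqrt (le_of_lt (div_pos (by linarith) hθ))]
      congr 1
      rw [← Real.rpow_natCast (t^γ) 2, ← Real.rpow_mul ht.le]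
      norm_num [mul_comm]
    have hcc : s^2/(s^2 + t^(2*γ)) = 1-θ := by
      rw [hs2]
      rw [show t^(2*γ) * ((1-θ)/θ) + t^(2*γ) = t^(2*γ)/θ by field_simp; ring]
      rw [div_eq_iff (by positivity)]
      ring
    have hq : (0:ℝ) < (1-θ)/θ := div_pos (by linarith) hθ
    have hs2θ : s^(2*ν/γ) = t^(2*ν) * ((1-θ)/θ)^θ := by
      have e0 : 2*ν/γ = 2*θ := by rw [hθdef]; ring
      have e1 : s^((2:ℝ)*θ) = (s^2)^θ := by
        rw [Real.rpow_mul hs.le]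
        congr 1
        rw [show (2:ℝ) = ((2:ℕ):ℝ) by norm_num, Real.rpow_natCast]
      rw [e0, e1, hs2, Real.mul_rpow hA.le hq.le]
      congr 1
      rw [← Real.rpow_mul ht.le]
      congr 1
      rw [hθdef]
      field_simp
    have hne : (1:ℝ) - θ ≠ 0 := by linarith
    clear_value θ s
    set I := ∫⁻ l, ENNReal.ofReal (s ^ 2 / (s ^ 2 + l ^ (2*γ))) ∂μ with hIdef
    have h2 : ENNReal.ofReal (1-θ) * μ (Ico 0 t) ≤ I := by
      have := step s hs
      rwa [hcc] at this
    have hS1s : ENNReal.ofReal (s ^ (-(2*ν/γ))) * I ≤ S1 := hS1 s hs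
    have hKmain : ENNReal.ofReal (s ^ (-(2*ν/γ))) * (ENNReal.ofReal (1-θ) * μ (Ico 0 t)) ≤ S1 :=
      le_trans (mul_le_mul_right h2 _) hS1s
    have hrealid : (t^(-(2*ν)) * s^(2*ν/γ) * (1-θ)⁻¹) * s^(-(2*ν/γ)) * (1-θ)
        = t^(-(2*ν)) := by
      rw [Real.rpow_neg hs.le]
      field_simp
    have hK'nn : 0 ≤ t^(-(2*ν)) * s^(2*ν/γ) * (1-θ)⁻¹ :=
      mul_nonneg (mul_nonneg (Real.rpow_nonneg ht.le _) (Real.rpow_nonneg hs.le _))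
        (inv_nonneg.2 (by linarith))
    have hcomb : ENNReal.ofReal (t^(-(2*ν)) * s^(2*ν/γ) * (1-θ)⁻¹) *
        (ENNReal.ofReal (s^(-(2*ν/γ))) * (ENNReal.ofReal (1-θ) * μ (Ico 0 t)))
        = ENNReal.ofReal (t^(-(2*ν))) * μ (Ico 0 t) := by
      rw [← mul_assoc, ← mul_assoc, ← ENNReal.ofReal_mul hK'nn,
        ← ENNReal.ofReal_mul (mul_nonneg hK'nn (Real.rpow_nonneg hs.le _)), hrealid]
    have hK'N : t^(-(2*ν)) * s^(2*ν/γ) * (1-θ)⁻¹ = (θ^θ * (1-θ)^(1-θ))⁻¹ := by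
      rw [hs2θ, Real.rpow_neg ht.le, Real.div_rpow (by linarith) hθ.le]
      have hmul : (1-θ)^θ * (1-θ)^(1-θ) = 1-θ := by
        rw [← Real.rpow_add (by linarith)]
        norm_num
      have h1 : (0:ℝ) < θ^θ := Real.rpow_pos_of_pos hθ _
      have h2 : (0:ℝ) < (1-θ)^(1-θ) := Real.rpow_pos_of_pos (by linarith) _
      have h3 : (0:ℝ) < t^(2*ν) := Real.rpow_pos_of_pos ht _
      field_simp [h1.ne', h2.ne', h3.ne']
      linear_combination hmul
    calc ENNReal.ofReal (t ^ (-(2*ν))) * μ (Ico 0 t)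
        = ENNReal.ofReal (t^(-(2*ν)) * s^(2*ν/γ) * (1-θ)⁻¹) *
          (ENNReal.ofReal (s^(-(2*ν/γ))) * (ENNReal.ofReal (1-θ) * μ (Ico 0 t))) :=
          hcomb.symm
      _ ≤ ENNReal.ofReal (t^(-(2*ν)) * s^(2*ν/γ) * (1-θ)⁻¹) * S1 :=
          mul_le_mul_right hKmain _
      _ = ENNReal.ofReal ((θ ^ θ * (1 - θ) ^ (1 - θ))⁻¹) * S1 := by rw [hK'N]



/-- Proposition: `√(1-ν/γ) ‖x‖_{ν:γ} ≤ |||x|||_ν ≤ N_{ν/γ} ‖x‖_{ν:γ}` (squared form).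
The spectral measure `μ_x(A) = ‖E_A x‖²` of `T*T` applied to `x` is modelled by a
finite Borel measure `μ` on `[0,∞)`.  Here
`‖x‖_{ν:γ}² = sup_{t>0} t^(-2ν/γ) ∫ t²/(t²+λ^(2γ)) dμ(λ)` and
`|||x|||_ν² = sup_{t>0} t^(-2ν) μ([0,t))`, `N_{ν/γ}² = ((ν/γ)^(ν/γ)(1-ν/γ)^(1-ν/γ))⁻¹`. -/
theorem stmt9 (μ : Measure ℝ) [IsFiniteMeasure μ] (hsupp : μ (Iio 0) = 0)
    (ν γ : ℝ) (hν : 0 ≤ ν) (hγ : ν < γ) :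
    ENNReal.ofReal (1 - ν/γ) *
      (⨆ t ∈ Ioi (0:ℝ), ENNReal.ofReal (t ^ (-(2*ν/γ))) *
        ∫⁻ l, ENNReal.ofReal (t ^ 2 / (t ^ 2 + l ^ (2*γ))) ∂μ)
      ≤ (⨆ t ∈ Ioi (0:ℝ), ENNReal.ofReal (t ^ (-(2*ν))) * μ (Ico 0 t)) ∧
    (⨆ t ∈ Ioi (0:ℝ), ENNReal.ofReal (t ^ (-(2*ν))) * μ (Ico 0 t))
      ≤ ENNReal.ofReal (((ν/γ) ^ (ν/γ) * (1 - ν/γ) ^ (1 - ν/γ))⁻¹) *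
        (⨆ t ∈ Ioi (0:ℝ), ENNReal.ofReal (t ^ (-(2*ν/γ))) *
          ∫⁻ l, ENNReal.ofReal (t ^ 2 / (t ^ 2 + l ^ (2*γ))) ∂μ) := by
  have hγ0 : 0 < γ := lt_of_le_of_lt hν hγ
  have hθ1 : ν/γ < 1 := (div_lt_one hγ0).2 hγ
  have hS2 : ∀ r, 0 < r →
      ENNReal.ofReal (r ^ (-(2*ν))) * μ (Ico 0 r)
        ≤ ⨆ t ∈ Ioi (0:ℝ), ENNReal.ofReal (t ^ (-(2*ν))) * μ (Ico 0 t) :=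
    fun r hr => le_iSup₂ (f := fun t (_ : t ∈ Ioi (0:ℝ)) =>
      ENNReal.ofReal (t ^ (-(2*ν))) * μ (Ico 0 t)) r (mem_Ioi.2 hr)
  have hS1 : ∀ s, 0 < s →
      ENNReal.ofReal (s ^ (-(2*ν/γ))) *
        ∫⁻ l, ENNReal.ofReal (s ^ 2 / (s ^ 2 + l ^ (2*γ))) ∂μ
        ≤ ⨆ t ∈ Ioi (0:ℝ), ENNReal.ofReal (t ^ (-(2*ν/γ))) *
          ∫⁻ l, ENNReal.ofReal (t ^ 2 / (t ^ 2 + l ^ (2*γ))) ∂μ :=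
    fun s hs => le_iSup₂ (f := fun t (_ : t ∈ Ioi (0:ℝ)) =>
      ENNReal.ofReal (t ^ (-(2*ν/γ))) *
        ∫⁻ l, ENNReal.ofReal (t ^ 2 / (t ^ 2 + l ^ (2*γ))) ∂μ) s (mem_Ioi.2 hs)
  constructor
  · simp_rw [ENNReal.mul_iSup]
    refine iSup₂_le fun t ht => ?_
    have ht0 : (0:ℝ) < t := ht
    have h := partA μ hsupp ν γ hν hγ hγ0 t ht0 _ hS2
    calc ENNReal.ofReal (1 - ν/γ) * (ENNReal.ofReal (t ^ (-(2*ν/γ))) *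
          ∫⁻ l, ENNReal.ofReal (t ^ 2 / (t ^ 2 + l ^ (2*γ))) ∂μ)
        ≤ ENNReal.ofReal (1 - ν/γ) * (ENNReal.ofReal (t ^ (-(2*ν/γ))) *
          (ENNReal.ofReal (t ^ (2*ν/γ) * (1/(1-ν/γ))) *
            ⨆ r ∈ Ioi (0:ℝ), ENNReal.ofReal (r ^ (-(2*ν))) * μ (Ico 0 r))) := by
          exact mul_le_mul_right (mul_le_mul_right h _) _
      _ = ENNReal.ofReal ((1 - ν/γ) * (t ^ (-(2*ν/γ)) * (t ^ (2*ν/γ) * (1/(1-ν/γ))))) *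
            ⨆ r ∈ Ioi (0:ℝ), ENNReal.ofReal (r ^ (-(2*ν))) * μ (Ico 0 r) := by
          have e : ENNReal.ofReal ((1 - ν/γ) * (t ^ (-(2*ν/γ)) *
              (t ^ (2*ν/γ) * (1/(1-ν/γ)))))
              = ENNReal.ofReal (1-ν/γ) * (ENNReal.ofReal (t ^ (-(2*ν/γ))) *
                ENNReal.ofReal (t ^ (2*ν/γ) * (1/(1-ν/γ)))) := by
            rw [ENNReal.ofReal_mul (by linarith : (0:ℝ) ≤ 1 - ν/γ),
              ENNReal.ofReal_mul (Real.rpow_nonneg ht0.le _)]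
          rw [e]
          ring
      _ = ⨆ r ∈ Ioi (0:ℝ), ENNReal.ofReal (r ^ (-(2*ν))) * μ (Ico 0 r) := by
          rw [show (1 - ν/γ) * (t ^ (-(2*ν/γ)) * (t ^ (2*ν/γ) * (1/(1-ν/γ)))) = 1 by
            rw [Real.rpow_neg ht0.le]
            have h1 : t ^ (2*ν/γ) ≠ 0 := (Real.rpow_pos_of_pos ht0 _).ne'
            have h2 : (1:ℝ) - ν/γ ≠ 0 := by linarith
            field_simp
            rw [div_self (by linarith : γ - ν ≠ 0)]]
          rw [ENNReal.ofReal_one, one_mul]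
  · refine iSup₂_le fun t ht => ?_
    exact partB μ hsupp ν γ hν hγ hγ0 t ht _ hS1
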